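/- arXiv:0707.0134 — 3 statements merged into one kernel-verified Lean document; each statement's English description precedes it below -/
import Mathlib

section
/- Let r ≥ 2 be an integer, let G be a graph, and let G' be an r-partite subgraph of G. If m is the number of edges of G incident to at least one vertex of V(G) \ V(G'), then G has an r-partite subgraph with at least e(G') + ((r-1)/r)·m edges. -/
open SimpleGraph

open Finset in
open scoped Classical in
lemma key {V : Type} [Fintype V] [DecidableEq V] (r : ℕ) (hr : 1 ≤ r) (c0 : V → Fin r)
    (S : Finset (Sym2 V)) (hdiag : ∀ e ∈ S, ¬ e.IsDiag) (A : Finset V)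
    (hout : ∀ e ∈ S, ∃ w ∈ e, w ∉ A) :
    ∀ B : Finset V, ∃ c : V → Fin r, (∀ v ∈ A, c v = c0 v) ∧
      ∃ T ⊆ S, (∀ e ∈ T, ∀ u ∈ e, ∀ w ∈ e, u ≠ w → c u ≠ c w) ∧
        (∀ e ∈ T, ∀ w ∈ e, w ∈ A ∪ B) ∧
        (r - 1) * (S.filter (fun e => ∀ w ∈ e, w ∈ A ∪ B)).card ≤ r * T.card := by
  intro B
  induction B using Finset.induction with
  | empty =>
    refine ⟨c0, fun v _ => rfl, ∅, empty_subset _, by simp, by simp, ?_⟩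
    have : S.filter (fun e => ∀ w ∈ e, w ∈ A ∪ ∅) = ∅ := by
      rw [Finset.filter_eq_empty_iff]
      intro e he h
      obtain ⟨w, hw, hwA⟩ := hout e he
      exact hwA (by simpa using h w hw)
    rw [this]; simp
  | @insert v B hvB ih =>
    obtain ⟨c, hc0, T, hTS, hgood, hTin, hcount⟩ := ih
    by_cases hvA : v ∈ A
    · have hAB : A ∪ insert v B = A ∪ B := by
        rw [Finset.union_insert, Finset.insert_eq_self]
        exact Finset.mem_union_left _ hvA
      rw [hAB]
      exact ⟨c, hc0, T, hTS, hgood, hTin, hcount⟩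
    · -- main step
      have hvAB : v ∉ A ∪ B := by simp [hvA, hvB]
      set N : Finset V := (A ∪ B).filter (fun w => s(v, w) ∈ S) with hN
      have hNsub : N ⊆ A ∪ B := Finset.filter_subset _ _
      -- pigeonhole
      have hsum : ∑ i : Fin r, (N.filter (fun w => c w = i)).card = N.card :=
        (Finset.card_eq_sum_card_fiberwise (fun x _ => Finset.mem_univ (c x))).symm
      haveI : Nonempty (Fin r) := ⟨⟨0, hr⟩⟩
      have hpig : ∃ i : Fin r, r * (N.filter (fun w => c w = i)).card ≤ N.card := by
        obtain ⟨i, _, hi⟩ := Finset.exists_le_of_sum_le (f := fun i : Fin r =>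
            r * (N.filter (fun w => c w = i)).card) (g := fun _ : Fin r => N.card)
          Finset.univ_nonempty (by
            rw [← Finset.mul_sum, hsum]
            simp [Finset.sum_const, mul_comm])
        exact ⟨i, hi⟩
      obtain ⟨i, hi⟩ := hpig
      set c' : V → Fin r := Function.update c v i with hc'
      set Tnew : Finset (Sym2 V) := (N.filter (fun w => c w ≠ i)).image (fun w => s(v, w)) with hTnew
      have hvc' : ∀ w ∈ A ∪ B, c' w = c w := fun w hw =>
        Function.update_of_ne (by rintro rfl; exact hvAB hw) _ _
      -- helper: edges of S containing v with endpoints in A ∪ insert v B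
      have hother : ∀ e ∈ S, v ∈ e → (∀ w ∈ e, w ∈ A ∪ insert v B) →
          ∃ w ∈ N, e = s(v, w) := by
        intro e heS hve hall
        refine ⟨Sym2.Mem.other' hve, ?_, (Sym2.other_spec' hve).symm⟩
        have hwmem : Sym2.Mem.other' hve ∈ e := Sym2.other_mem' hve
        have hwv : Sym2.Mem.other' hve ≠ v := by
          intro h
          apply hdiag e heS
          rw [← Sym2.other_spec' hve, h]
          exact Sym2.mk_isDiag_iff.2 rfl
        have := hall _ hwmem
        simp only [Finset.mem_union, Finset.mem_insert] at this
        rcases this with h | h | h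
        · rw [hN, Finset.mem_filter]
          refine ⟨Finset.mem_union_left _ h, by rw [Sym2.other_spec' hve]; exact heS⟩
        · exact absurd h hwv
        · rw [hN, Finset.mem_filter]
          refine ⟨Finset.mem_union_right _ h, by rw [Sym2.other_spec' hve]; exact heS⟩
      -- the new filter splits
      have hsplitF : S.filter (fun e => ∀ w ∈ e, w ∈ A ∪ insert v B)
          = S.filter (fun e => ∀ w ∈ e, w ∈ A ∪ B) ∪ N.image (fun w => s(v, w)) := by
        ext e
        simp only [Finset.mem_filter, Finset.mem_union, Finset.mem_image]
        constructor
        · rintro ⟨heS, hall⟩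
          by_cases hve : v ∈ e
          · obtain ⟨w, hwN, rfl⟩ := hother e heS hve (fun w hw => Finset.mem_union.2 (hall w hw))
            exact Or.inr ⟨w, hwN, rfl⟩
          · refine Or.inl ⟨heS, fun w hw => ?_⟩
            have := hall w hw
            simp only [Finset.mem_union, Finset.mem_insert] at this
            rcases this with h | h | h
            · exact Or.inl h
            · exact absurd (h ▸ hw) hve
            · exact Or.inr h
        · rintro (⟨heS, hall⟩ | ⟨w, hwN, rfl⟩)
          · refine ⟨heS, fun u hu => ?_⟩
            simp only [Finset.mem_union, Finset.mem_insert]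
            rcases hall u hu with h | h
            · exact Or.inl h
            · exact Or.inr (Or.inr h)
          · refine ⟨(Finset.mem_filter.1 hwN).2, fun u hu => ?_⟩
            simp only [Finset.mem_union, Finset.mem_insert]
            rcases Sym2.mem_iff.1 hu with rfl | rfl
            · exact Or.inr (Or.inl rfl)
            · rcases Finset.mem_union.1 (hNsub hwN) with h | h
              · exact Or.inl h
              · exact Or.inr (Or.inr h)
      have hdisjF : Disjoint (S.filter (fun e => ∀ w ∈ e, w ∈ A ∪ B))
          (N.image (fun w => s(v, w))) := by
        rw [Finset.disjoint_left]
        rintro e he hi2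
        obtain ⟨w, _, rfl⟩ := Finset.mem_image.1 hi2
        exact hvAB ((Finset.mem_filter.1 he).2 v (Sym2.mem_mk_left v w))
      have hinjN : Set.InjOn (fun w => s(v, w)) N := by
        intro a _ b _ h
        simpa using (Sym2.congr_right).1 h
      have hcardim : (N.image (fun w => s(v, w))).card = N.card :=
        Finset.card_image_of_injOn hinjN
      have hcardTnew : Tnew.card = (N.filter (fun w => c w ≠ i)).card :=
        Finset.card_image_of_injOn (hinjN.mono (Finset.filter_subset _ _))
      have hdisjT : Disjoint T Tnew := by
        rw [Finset.disjoint_left]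
        rintro e heT heTn
        obtain ⟨w, _, rfl⟩ := Finset.mem_image.1 heTn
        exact hvAB (hTin _ heT v (Sym2.mem_mk_left v w))
      refine ⟨c', fun w hw => (hvc' w (Finset.mem_union_left _ hw)).trans (hc0 w hw),
        T ∪ Tnew, ?_, ?_, ?_, ?_⟩
      · refine Finset.union_subset hTS ?_
        intro e he
        obtain ⟨w, hwN, rfl⟩ := Finset.mem_image.1 he
        exact (Finset.mem_filter.1 (Finset.filter_subset _ _ hwN)).2
      · intro e he u hu x hx hux
        rcases Finset.mem_union.1 he with heT | heTn
        · rw [hvc' u (hTin e heT u hu), hvc' x (hTin e heT x hx)]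
          exact hgood e heT u hu x hx hux
        · obtain ⟨w, hwN, rfl⟩ := Finset.mem_image.1 heTn
          have hwAB : w ∈ A ∪ B := hNsub (Finset.filter_subset _ _ hwN)
          have hwi : c w ≠ i := (Finset.mem_filter.1 hwN).2
          have hcv : c' v = i := Function.update_self _ _ _
          have hcw : c' w = c w := hvc' w hwAB
          rcases Sym2.mem_iff.1 hu with rfl | rfl <;> rcases Sym2.mem_iff.1 hx with rfl | rfl
          · exact absurd rfl hux
          · rw [hcv, hcw]; exact fun h => hwi h.symm
          · rw [hcv, hcw]; exact hwi
          · exact absurd rfl hux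
      · intro e he w hw
        rw [Finset.union_insert]
        rcases Finset.mem_union.1 he with heT | heTn
        · exact Finset.mem_insert_of_mem (hTin e heT w hw)
        · obtain ⟨u, huN, rfl⟩ := Finset.mem_image.1 heTn
          rcases Sym2.mem_iff.1 hw with rfl | rfl
          · exact Finset.mem_insert_self _ _
          · exact Finset.mem_insert_of_mem (hNsub (Finset.filter_subset _ _ huN))
      · rw [hsplitF, Finset.card_union_of_disjoint hdisjF, hcardim,
          Finset.card_union_of_disjoint hdisjT, hcardTnew]
        have hND : (N.filter (fun w => c w = i)).card + (N.filter (fun w => c w ≠ i)).card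
            = N.card := Finset.card_filter_add_card_filter_not _
        have h2 : (r - 1) * N.card ≤ r * (N.filter (fun w => c w ≠ i)).card := by
          obtain ⟨s, rfl⟩ : ∃ s, r = s + 1 := ⟨r - 1, (Nat.succ_pred_eq_of_pos hr).symm⟩
          simp only [Nat.add_sub_cancel]
          nlinarith [hi, hND]
        rw [Nat.mul_add, Nat.mul_add]
        exact Nat.add_le_add hcount h2

/-- If `G'` is an `r`-partite subgraph of `G` and `m` counts the edges of `G`
incident to at least one vertex outside `V(G')`, then `G` has an `r`-partite subgraph with
at least `e(G') + ((r-1)/r)·m` edges. -/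
theorem stmt0 {V : Type} [Fintype V] (r : ℕ) (hr : 2 ≤ r)
    (G : SimpleGraph V) (G' : G.Subgraph) (hcol : G'.coe.Colorable r) :
    ∃ H : G.Subgraph, H.coe.Colorable r ∧
      (G'.edgeSet.ncard : ℚ) + ((r : ℚ) - 1) / r *
        ({e ∈ G.edgeSet | ∃ v ∈ e, v ∉ G'.verts}.ncard : ℚ) ≤ (H.edgeSet.ncard : ℚ) := by
  classical
  obtain ⟨C⟩ := hcol
  set Sset : Set (Sym2 V) := {e ∈ G.edgeSet | ∃ v ∈ e, v ∉ G'.verts} with hSset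
  set A : Finset V := G'.verts.toFinset with hA
  let c0 : V → Fin r := fun v => if h : v ∈ G'.verts then C ⟨v, h⟩ else ⟨0, by omega⟩
  let S : Finset (Sym2 V) := Sset.toFinset
  have hSm : ∀ e, e ∈ S ↔ e ∈ G.edgeSet ∧ ∃ v ∈ e, v ∉ G'.verts := by
    intro e; rw [Set.mem_toFinset]; rfl
  have hdiag : ∀ e ∈ S, ¬ e.IsDiag := fun e he =>
    G.not_isDiag_of_mem_edgeSet ((hSm e).1 he).1
  have hout : ∀ e ∈ S, ∃ w ∈ e, w ∉ A := by
    intro e he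
    obtain ⟨w, hw, hw2⟩ := ((hSm e).1 he).2
    exact ⟨w, hw, by simpa [hA] using hw2⟩
  obtain ⟨c, hc0, T, hTS, hgood, -, hcount⟩ :=
    key r (by omega) c0 S hdiag A hout Finset.univ
  have hfilt : S.filter (fun e => ∀ w ∈ e, w ∈ A ∪ Finset.univ) = S :=
    Finset.filter_true_of_mem (fun e _ => fun w _ => by simp)
  rw [hfilt] at hcount
  -- the r-partite supergraph
  let Kc : SimpleGraph V :=
    { Adj := fun u w => c u ≠ c w
      symm := ⟨fun u w h => h.symm⟩
      loopless := ⟨fun u h => h rfl⟩ }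
  refine ⟨SimpleGraph.toSubgraph (G ⊓ Kc) inf_le_left, ⟨Coloring.mk (fun v => c v.1) ?_⟩, ?_⟩
  · intro u w h
    exact h.2
  · set H : G.Subgraph := SimpleGraph.toSubgraph (G ⊓ Kc) inf_le_left with hH
    have hHe : ∀ u w, s(u, w) ∈ H.edgeSet ↔ G.Adj u w ∧ c u ≠ c w := by
      intro u w
      rw [Subgraph.mem_edgeSet]
      exact Iff.rfl
    -- G' edges are in H
    have h1 : G'.edgeSet ⊆ H.edgeSet := by
      intro e he
      induction e with
      | h u w =>
        rw [Subgraph.mem_edgeSet] at he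
        rw [hHe]
        refine ⟨G'.adj_sub he, ?_⟩
        have hu : u ∈ G'.verts := G'.edge_vert he
        have hw : w ∈ G'.verts := G'.edge_vert he.symm
        have : c u = C ⟨u, hu⟩ := by
          rw [hc0 u (by simpa [hA] using hu)]
          simp only [c0, dif_pos hu]
        have hcw : c w = C ⟨w, hw⟩ := by
          rw [hc0 w (by simpa [hA] using hw)]
          simp only [c0, dif_pos hw]
        rw [this, hcw]
        exact C.valid (by rwa [Subgraph.coe_adj])
    have h2 : (↑T : Set (Sym2 V)) ⊆ H.edgeSet := by
      intro e he
      rw [Finset.mem_coe] at he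
      have heS := hTS he
      induction e with
      | h u w =>
        rw [hHe]
        have hadj : G.Adj u w := (G.mem_edgeSet).1 ((hSm _).1 heS).1
        exact ⟨hadj, hgood _ he u (Sym2.mem_mk_left _ _) w (Sym2.mem_mk_right _ _) hadj.ne⟩
    have h3 : Disjoint G'.edgeSet (↑T : Set (Sym2 V)) := by
      rw [Set.disjoint_left]
      intro e he heT
      obtain ⟨w, hw, hw2⟩ := ((hSm e).1 (hTS (Finset.mem_coe.1 heT))).2
      induction e with
      | h u x =>
        rw [Subgraph.mem_edgeSet] at he
        rcases Sym2.mem_iff.1 hw with rfl | rfl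
        · exact hw2 (G'.edge_vert he)
        · exact hw2 (G'.edge_vert he.symm)
    -- cardinalities
    have hunion : G'.edgeSet.ncard + T.card ≤ H.edgeSet.ncard := by
      have := Set.ncard_union_eq h3 (Set.toFinite _) (Set.toFinite _)
      rw [Set.ncard_coe_finset] at this
      rw [← this]
      exact Set.ncard_le_ncard (Set.union_subset h1 h2) (Set.toFinite _)
    have hScard : Sset.ncard = S.card := Set.ncard_eq_toFinset_card' _
    -- rational arithmetic
    have hrQ : (0 : ℚ) < r := by positivity
    have h4 : ((r : ℚ) - 1) * Sset.ncard ≤ (r : ℚ) * T.card := by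
      have : (((r - 1) * S.card : ℕ) : ℚ) ≤ ((r * T.card : ℕ) : ℚ) := by
        exact_mod_cast hcount
      push_cast [Nat.cast_sub (by omega : 1 ≤ r)] at this
      rw [hScard]
      push_cast
      linarith
    have h5 : ((r : ℚ) - 1) / r * Sset.ncard ≤ (T.card : ℚ) := by
      rw [div_mul_eq_mul_div, div_le_iff₀ hrQ]
      linarith
    have h6 : (G'.edgeSet.ncard : ℚ) + T.card ≤ (H.edgeSet.ncard : ℚ) := by
      exact_mod_cast hunion
    linarith
end

section
/- For any graph F and any positive integer b, the minimum number of edges whose deletion makes the b-blowup F_b of F r-colorable equals b² times the minimum number of edges whose deletion makes F r-colorable. That is, E'_r(F_b) = b²·E'_r(F). -/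
open SimpleGraph

/-- `Ecol G r` : the minimum number of edge deletions making `G` `r`-colorable. -/
noncomputable def Ecol {V : Type} (G : SimpleGraph V) (r : ℕ) : ℕ :=
  sInf {m | ∃ S : Set (Sym2 V), S ⊆ G.edgeSet ∧ S.ncard = m ∧ (G.deleteEdges S).Colorable r}

open scoped Classical

namespace Stmt2Aux

variable {α : Type} {b : ℕ}

/-- Projection of unordered pairs. -/
noncomputable def pr : Sym2 (α × Fin b) → Sym2 α := Sym2.map Prod.fst

/-- Lift of unordered pairs along a transversal `t`. -/
noncomputable def th (t : α → Fin b) : Sym2 α → Sym2 (α × Fin b) :=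
  Sym2.map (fun u => (u, t u))

@[simp] lemma pr_th (t : α → Fin b) (e : Sym2 α) : pr (th t e) = e := by
  induction e with
  | _ x y => simp [pr, th]

lemma th_injective (t : α → Fin b) : Function.Injective (th t) :=
  Function.LeftInverse.injective (g := pr) (fun e => pr_th t e)

lemma mem_blowup_edgeSet_iff (F : SimpleGraph α) (e' : Sym2 (α × Fin b)) :
    e' ∈ (F.comap (Prod.fst : α × Fin b → α)).edgeSet ↔ pr e' ∈ F.edgeSet := by
  induction e' with
  | _ x y => simp [pr]

lemma fiber_card (u v : α) [Fintype α] (huv : u ≠ v) (i j : Fin b) :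
    (Finset.univ.filter (fun t : α → Fin b => t u = i ∧ t v = j)).card
      = b ^ (Fintype.card α - 2) := by
  classical
  rw [← Fintype.card_subtype]
  have e : {t : α → Fin b // t u = i ∧ t v = j} ≃ ({x : α // x ≠ u ∧ x ≠ v} → Fin b) :=
    { toFun := fun t x => t.1 x.1
      invFun := fun g =>
        ⟨fun x => if h1 : x = u then i else if h2 : x = v then j else g ⟨x, h1, h2⟩, by
          refine ⟨by simp, ?_⟩
          simp [Ne.symm huv]⟩
      left_inv := by
        rintro ⟨t, ht1, ht2⟩
        apply Subtype.ext
        funext x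
        by_cases h1 : x = u
        · subst h1; simp [ht1.symm]
        · by_cases h2 : x = v
          · subst h2; simp [h1, ht2.symm]
          · simp [h1, h2]
      right_inv := by
        intro g
        funext x
        simp [x.2.1, x.2.2] }
  rw [Fintype.card_congr e, Fintype.card_fun, Fintype.card_fin]
  congr 1
  have e2 : {x : α // x ≠ u ∧ x ≠ v} ≃ {x : α // ¬(x = u ∨ x = v)} :=
    Equiv.subtypeEquivRight (fun x => by tauto)
  rw [Fintype.card_congr e2, Fintype.card_subtype_compl]
  congr 1
  have e3 : {x : α // x = u ∨ x = v} ≃ {x : α // x ∈ ({u, v} : Finset α)} :=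
    Equiv.subtypeEquivRight (fun x => by simp)
  rw [Fintype.card_congr e3, Fintype.card_coe, Finset.card_pair huv]

lemma count_lemma (F : SimpleGraph α) [Fintype α] {e' : Sym2 (α × Fin b)}
    (h : e' ∈ (F.comap (Prod.fst : α × Fin b → α)).edgeSet) :
    (Finset.univ.filter (fun t : α → Fin b => th t (pr e') = e')).card
      = b ^ (Fintype.card α - 2) := by
  classical
  induction e' with
  | _ x y =>
    rw [mem_edgeSet, comap_adj] at h
    have hne : x.1 ≠ y.1 := h.ne
    have hcond : ∀ t : α → Fin b, (th t (pr s(x, y)) = s(x, y)) ↔ (t x.1 = x.2 ∧ t y.1 = y.2) := by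
      intro t
      simp only [pr, th, Sym2.map_pair_eq, Sym2.eq_iff]
      constructor
      · rintro (⟨h1, h2⟩ | ⟨h1, h2⟩)
        · exact ⟨(Prod.ext_iff.1 h1).2, (Prod.ext_iff.1 h2).2⟩
        · exact absurd (Prod.ext_iff.1 h1).1 hne
      · rintro ⟨h1, h2⟩
        left
        exact ⟨Prod.ext rfl h1, Prod.ext rfl h2⟩
    rw [Finset.filter_congr (fun t _ => by rw [hcond t])]
    exact fiber_card x.1 y.1 hne x.2 y.2

end Stmt2Aux

open Stmt2Aux

lemma stmt2_upper {α : Type} [Fintype α] (F : SimpleGraph α) (r b : ℕ)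
    {S : Set (Sym2 α)} (hsub : S ⊆ F.edgeSet) (hcol : (F.deleteEdges S).Colorable r) :
    ∃ S' : Set (Sym2 (α × Fin b)),
      S' ⊆ (F.comap (Prod.fst : α × Fin b → α)).edgeSet ∧ S'.ncard = b ^ 2 * S.ncard ∧
      ((F.comap (Prod.fst : α × Fin b → α)).deleteEdges S').Colorable r := by
  classical
  refine ⟨pr ⁻¹' S, ?_, ?_, ?_⟩
  · intro e' he'
    rw [mem_blowup_edgeSet_iff]
    exact hsub he'
  · -- cardinality via bijection with S ×ˢ univ
    have hS : (pr ⁻¹' S : Set (Sym2 (α × Fin b))) =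
        (fun p : Sym2 α × (Fin b × Fin b) =>
          s((p.1.out.1, p.2.1), (p.1.out.2, p.2.2))) '' (S ×ˢ Set.univ) := by
      ext e'
      constructor
      · intro he'
        have hmem : pr e' ∈ S := he'
        have hout : Sym2.mk (pr e').out.1 (pr e').out.2 = pr e' := Quot.out_eq _
        have hnd : (pr e').out.1 ≠ (pr e').out.2 := by
          intro hEq
          have : (pr e').IsDiag := by
            rw [← hout]
            exact (Sym2.mk_isDiag_iff).2 hEq
          exact (F.not_isDiag_of_mem_edgeSet (hsub hmem)) this
        induction e' with
        | _ x y =>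
          have hxy : s(x.1, y.1) = Sym2.mk (pr s(x, y)).out.1 (pr s(x, y)).out.2 := by
            rw [hout]; rfl
          rw [Sym2.eq_iff] at hxy
          rcases hxy with ⟨h1, h2⟩ | ⟨h1, h2⟩
          · exact ⟨(pr s(x, y), (x.2, y.2)), ⟨hmem, trivial⟩, by
              simp only [← h1, ← h2]⟩
          · exact ⟨(pr s(x, y), (y.2, x.2)), ⟨hmem, trivial⟩, by
              simp only [← h1, ← h2]
              rw [Sym2.eq_swap]⟩
      · rintro ⟨⟨e, ij⟩, ⟨he, -⟩, rfl⟩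
        have hout : Sym2.mk e.out.1 e.out.2 = e := Quot.out_eq _
        show pr _ ∈ S
        simp only [pr, Sym2.map_pair_eq]
        rw [show s(e.out.1, e.out.2) = e from hout]
        exact he
    rw [hS]
    have hinj : Set.InjOn (fun p : Sym2 α × (Fin b × Fin b) =>
        s((p.1.out.1, p.2.1), (p.1.out.2, p.2.2))) (S ×ˢ Set.univ) := by
      rintro ⟨e, i, j⟩ ⟨he, -⟩ ⟨e', i', j'⟩ ⟨he', -⟩ hEq
      simp only at hEq
      have h1 : pr s(((e.out.1 : α), i), (e.out.2, j)) = pr s((e'.out.1, i'), (e'.out.2, j')) := by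
        rw [hEq]
      simp only [pr, Sym2.map_pair_eq] at h1
      have he1 : Sym2.mk e.out.1 e.out.2 = e := Quot.out_eq _
      have he2 : Sym2.mk e'.out.1 e'.out.2 = e' := Quot.out_eq _
      have hee' : e = e' := by
        rw [← he1, ← he2]
        exact h1
      subst hee'
      have hnd : e.out.1 ≠ e.out.2 := by
        intro hdiag
        exact (F.not_isDiag_of_mem_edgeSet (hsub he))
          (by rw [← he1]; exact (Sym2.mk_isDiag_iff).2 hdiag)
      rw [Sym2.eq_iff] at hEq
      rcases hEq with ⟨ha, hb'⟩ | ⟨ha, hb'⟩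
      · have := (Prod.ext_iff.1 ha).2
        have := (Prod.ext_iff.1 hb').2
        simp_all
      · exact absurd (Prod.ext_iff.1 ha).1 hnd
    rw [Set.ncard_image_of_injOn hinj]
    rw [← Nat.card_coe_set_eq, Nat.card_congr (Equiv.Set.prod _ _), Nat.card_prod,
      Nat.card_congr (Equiv.Set.univ _), Nat.card_prod, Nat.card_coe_set_eq]
    simp only [Nat.card_eq_fintype_card, Fintype.card_fin]
    ring
  · obtain ⟨c⟩ := hcol
    refine ⟨Coloring.mk (fun x => c x.1) ?_⟩
    rintro x y hxy
    rw [deleteEdges_adj, comap_adj] at hxy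
    apply c.valid
    rw [deleteEdges_adj]
    refine ⟨hxy.1, fun hmem => hxy.2 ?_⟩
    have : pr s(x, y) ∈ S := by simpa [pr] using hmem
    exact this

lemma stmt2_pullback {α : Type} [Fintype α] (F : SimpleGraph α) (r b : ℕ)
    {S' : Set (Sym2 (α × Fin b))} (hsub : S' ⊆ (F.comap (Prod.fst : α × Fin b → α)).edgeSet)
    (hcol : ((F.comap (Prod.fst : α × Fin b → α)).deleteEdges S').Colorable r)
    (t : α → Fin b) :
    {e : Sym2 α | e ∈ F.edgeSet ∧ th t e ∈ S'} ⊆ F.edgeSet ∧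
    (F.deleteEdges {e : Sym2 α | e ∈ F.edgeSet ∧ th t e ∈ S'}).Colorable r := by
  classical
  refine ⟨fun e he => he.1, ?_⟩
  obtain ⟨c⟩ := hcol
  refine ⟨Coloring.mk (fun u => c (u, t u)) ?_⟩
  intro u v huv
  rw [deleteEdges_adj] at huv
  apply c.valid
  rw [deleteEdges_adj, comap_adj]
  refine ⟨huv.1, fun hmem => huv.2 ⟨F.mem_edgeSet.2 huv.1, ?_⟩⟩
  show Sym2.map _ s(u, v) ∈ S'
  rw [Sym2.map_pair_eq]
  exact hmem

lemma stmt2_lower {α : Type} [Fintype α] (F : SimpleGraph α) (r b : ℕ) (hb : 0 < b)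
    {S' : Set (Sym2 (α × Fin b))} (hsub : S' ⊆ (F.comap (Prod.fst : α × Fin b → α)).edgeSet)
    (hcol : ((F.comap (Prod.fst : α × Fin b → α)).deleteEdges S').Colorable r) :
    b ^ 2 * Ecol F r ≤ S'.ncard := by
  classical
  set k := Ecol F r with hk
  set St : (α → Fin b) → Set (Sym2 α) :=
    fun t => {e : Sym2 α | e ∈ F.edgeSet ∧ th t e ∈ S'} with hSt
  have hmemA : ∀ t, k ≤ (St t).ncard := by
    intro t
    obtain ⟨h1, h2⟩ := stmt2_pullback F r b hsub hcol t
    exact Nat.sInf_le ⟨St t, h1, rfl, h2⟩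
  rcases Set.eq_empty_or_nonempty S' with hS' | hS'
  · have : St (fun _ => ⟨0, hb⟩) = ∅ := by
      ext e; simp [hSt, hS']
    have hk0 : k = 0 := Nat.le_zero.1 (by simpa [this] using hmemA (fun _ => ⟨0, hb⟩))
    simp [hk0, hS']
  · -- there is an edge, so Fintype.card α ≥ 2
    obtain ⟨e'₀, he'₀⟩ := hS'
    have hcard2 : 2 ≤ Fintype.card α := by
      have hmem := (mem_blowup_edgeSet_iff F e'₀).1 (hsub he'₀)
      induction e'₀ with
      | _ x y =>
        have : F.Adj x.1 y.1 := by
          simpa [pr] using hmem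
        exact Fintype.one_lt_card_iff.2 ⟨x.1, y.1, this.ne⟩
    set n := Fintype.card α with hn
    have hSfin : S'.Finite := Set.toFinite _
    set B : Finset (Sym2 (α × Fin b)) := hSfin.toFinset with hB
    have hBcoe : (B : Set (Sym2 (α × Fin b))) = S' := hSfin.coe_toFinset
    have hBcard : B.card = S'.ncard := (Set.ncard_eq_toFinset_card S' hSfin).symm
    -- each St t is in bijection with a filtered subset of B
    have hcardSt : ∀ t, (St t).ncard = (B.filter (fun e' => th t (pr e') = e')).card := by
      intro t
      have himg : th t '' (St t) = ↑(B.filter (fun e' => th t (pr e') = e')) := by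
        ext e'
        simp only [Finset.coe_filter, Set.mem_setOf_eq, Finset.mem_coe,
          Set.Finite.mem_toFinset, hB, Set.mem_image]
        constructor
        · rintro ⟨e, ⟨heE, heS⟩, rfl⟩
          exact ⟨heS, by rw [pr_th]⟩
        · rintro ⟨heS, hfix⟩
          refine ⟨pr e', ⟨?_, ?_⟩, hfix⟩
          · exact (mem_blowup_edgeSet_iff F e').1 (hsub heS)
          · rw [hfix]; exact heS
      rw [← Set.ncard_image_of_injective (St t) (th_injective t), himg, Set.ncard_coe_finset]
    -- double counting
    have hdc : ∑ t : α → Fin b, (B.filter (fun e' => th t (pr e') = e')).card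
        = B.card * b ^ (n - 2) := by
      have swap : ∑ t : α → Fin b, (B.filter (fun e' => th t (pr e') = e')).card
          = ∑ e' ∈ B, (Finset.univ.filter (fun t : α → Fin b => th t (pr e') = e')).card := by
        simp only [Finset.card_filter]
        rw [Finset.sum_comm]
      rw [swap]
      rw [Finset.sum_congr rfl (fun e' he' => ?_), Finset.sum_const, smul_eq_mul]
      have : e' ∈ S' := by rw [← hBcoe]; exact he'
      exact count_lemma F (hsub this)
    have hmain : b ^ n * k ≤ B.card * b ^ (n - 2) := by
      calc b ^ n * k = ∑ _t : α → Fin b, k := by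
            rw [Finset.sum_const, smul_eq_mul, Finset.card_univ, Fintype.card_fun,
              Fintype.card_fin]
        _ ≤ ∑ t : α → Fin b, (St t).ncard := Finset.sum_le_sum (fun t _ => hmemA t)
        _ = ∑ t : α → Fin b, (B.filter (fun e' => th t (pr e') = e')).card :=
            Finset.sum_congr rfl (fun t _ => hcardSt t)
        _ = B.card * b ^ (n - 2) := hdc
    have hpow : b ^ n = b ^ (n - 2) * b ^ 2 := by
      rw [← pow_add, Nat.sub_add_cancel hcard2]
    rw [hpow, mul_assoc, mul_comm B.card] at hmain
    have := Nat.le_of_mul_le_mul_left hmain (pow_pos hb (n - 2))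
    rw [hBcard] at this
    exact this

/-- `E'_r(F_b) = b² · E'_r(F)`, where the `b`-blowup of `F` is modelled as
the comap of `F` along the projection `α × Fin b → α`. -/
theorem stmt2 {α : Type} [Fintype α] (F : SimpleGraph α) (r b : ℕ) (hb : 0 < b) :
    Ecol (F.comap (Prod.fst : α × Fin b → α)) r = b ^ 2 * Ecol F r := by
  classical
  set A := {m | ∃ S : Set (Sym2 α), S ⊆ F.edgeSet ∧ S.ncard = m ∧ (F.deleteEdges S).Colorable r}
    with hA
  set Bset := {m | ∃ S : Set (Sym2 (α × Fin b)),
      S ⊆ (F.comap (Prod.fst : α × Fin b → α)).edgeSet ∧ S.ncard = m ∧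
      ((F.comap (Prod.fst : α × Fin b → α)).deleteEdges S).Colorable r} with hBset
  have hEA : Ecol F r = sInf A := rfl
  have hEB : Ecol (F.comap (Prod.fst : α × Fin b → α)) r = sInf Bset := rfl
  rcases Set.eq_empty_or_nonempty Bset with hBe | hBne
  · -- Bset empty forces A empty
    have hAe : A = ∅ := by
      rw [Set.eq_empty_iff_forall_notMem]
      rintro m ⟨S, h1, h2, h3⟩
      obtain ⟨S', hs1, hs2, hs3⟩ := stmt2_upper F r b h1 h3
      have hmem : (b ^ 2 * m) ∈ Bset := ⟨S', hs1, by rw [hs2, h2], hs3⟩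
      rw [hBe] at hmem
      exact hmem
    rw [hEA, hEB, hBe, hAe]
    simp [Nat.sInf_empty]
  · rcases Set.eq_empty_or_nonempty A with hAe | hAne
    · -- A empty but Bset nonempty: impossible
      obtain ⟨m, S', h1, h2, h3⟩ := hBne
      obtain ⟨hs1, hs2⟩ := stmt2_pullback F r b h1 h3 (fun _ => ⟨0, hb⟩)
      have hmem : _ ∈ A := ⟨_, hs1, rfl, hs2⟩
      rw [hAe] at hmem
      exact hmem.elim
    · apply le_antisymm
      · -- upper: construct blowup of optimal set for F
        obtain ⟨S, h1, h2, h3⟩ := Nat.sInf_mem hAne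
        obtain ⟨S', hs1, hs2, hs3⟩ := stmt2_upper F r b h1 h3
        rw [hEB]
        have hmem : b ^ 2 * sInf A ∈ Bset := ⟨S', hs1, by rw [hs2, h2], hs3⟩
        calc sInf Bset ≤ b ^ 2 * sInf A := Nat.sInf_le hmem
          _ = b ^ 2 * Ecol F r := by rw [hEA]
      · -- lower
        obtain ⟨S', h1, h2, h3⟩ := Nat.sInf_mem hBne
        rw [hEB, ← h2]
        exact stmt2_lower F r b hb h1 h3
end

section
/- If F is a graph and b a positive integer, then for every set S of edges whose removal makes the b-blowup F_b r-colorable we have |S| ≥ b²·E'_r(F). In particular, selecting one vertex from each blowup class yields a copy of F spanning at least E'_r(F) edges of S. -/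
open SimpleGraph

/-- any edge set `S` whose removal makes the `b`-blowup of `F` `r`-colorable has
`|S| ≥ b²·E'_r(F)`; moreover every choice of one vertex per blowup class yields a copy of `F`
spanning at least `E'_r(F)` edges of `S`. -/
theorem stmt3 {α : Type} [Fintype α] (F : SimpleGraph α) (r b : ℕ) (hb : 0 < b)
    (S : Set (Sym2 (α × Fin b)))
    (hsub : S ⊆ (F.comap (Prod.fst : α × Fin b → α)).edgeSet)
    (hcol : ((F.comap (Prod.fst : α × Fin b → α)).deleteEdges S).Colorable r) :
    b ^ 2 * Ecol F r ≤ S.ncard ∧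
      ∀ g : α → Fin b,
        Ecol F r ≤ {e ∈ S | ∃ u v : α, F.Adj u v ∧ e = s((u, g u), (v, g v))}.ncard := by
  classical
  -- The key per-copy bound.
  have key : ∀ g : α → Fin b,
      Ecol F r ≤ {e ∈ S | ∃ u v : α, F.Adj u v ∧ e = s((u, g u), (v, g v))}.ncard := by
    intro g
    set ι : α → α × Fin b := fun v => (v, g v) with hι
    have hinj : Function.Injective ι := fun a b h => congrArg Prod.fst h
    set T : Set (Sym2 α) := {e | e ∈ F.edgeSet ∧ Sym2.map ι e ∈ S} with hT
    have himg : {e ∈ S | ∃ u v : α, F.Adj u v ∧ e = s((u, g u), (v, g v))}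
        = Sym2.map ι '' T := by
      ext e
      constructor
      · rintro ⟨heS, u, v, hadj, rfl⟩
        exact ⟨s(u, v), ⟨hadj, heS⟩, rfl⟩
      · rintro ⟨e', ⟨he', hmem⟩, rfl⟩
        refine ⟨hmem, ?_⟩
        induction e' using Sym2.inductionOn with
        | hf u v => exact ⟨u, v, he', rfl⟩
    have hcolT : (F.deleteEdges T).Colorable r := by
      obtain ⟨C⟩ := hcol
      refine ⟨C.comp ⟨ι, ?_⟩⟩
      intro u v huv
      rw [SimpleGraph.deleteEdges_adj] at huv ⊢
      refine ⟨huv.1, fun hc => huv.2 ⟨huv.1, hc⟩⟩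
    have hEcol : Ecol F r ≤ T.ncard :=
      Nat.sInf_le ⟨T, fun e he => he.1, rfl, hcolT⟩
    rw [himg, Set.ncard_image_of_injective T (Sym2.map.injective hinj)]
    exact hEcol
  refine ⟨?_, key⟩
  rcases Set.eq_empty_or_nonempty S with rfl | ⟨e0, he0⟩
  · have h := key (fun _ => ⟨0, hb⟩)
    simp only [Set.sep_empty, Set.ncard_empty, Nat.le_zero] at h ⊢
    simp [h]
  -- S is nonempty, so F has an edge, so 2 ≤ |α|.
  obtain ⟨x, y⟩ := e0
  have hxyadj : F.Adj x.1 y.1 := hsub he0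
  have hne : x.1 ≠ y.1 := hxyadj.ne
  have hn2 : 2 ≤ Fintype.card α :=
    Fintype.one_lt_card_iff_nontrivial.mpr ⟨x.1, y.1, hne⟩
  set n := Fintype.card α with hn
  -- finiteness bookkeeping
  have hS : S.Finite := Set.toFinite S
  set Sf := hS.toFinset with hSf
  set P : (α → Fin b) → Sym2 (α × Fin b) → Prop :=
    fun g e => ∃ u v : α, F.Adj u v ∧ e = s((u, g u), (v, g v)) with hP
  have hcardset : ∀ g : α → Fin b,
      {e ∈ S | P g e}.ncard = (Sf.filter (P g)).card := by
    intro g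
    have : {e ∈ S | P g e} = ↑(Sf.filter (P g)) := by
      ext e
      simp only [hSf, Finset.coe_filter, Set.Finite.mem_toFinset, Set.mem_setOf_eq]
    rw [this, Set.ncard_coe_finset]
  -- per-edge count bound
  have peredge : ∀ e ∈ Sf,
      (Finset.univ.filter (fun g : α → Fin b => P g e)).card ≤ b ^ (n - 2) := by
    intro e he
    have heS : e ∈ S := hS.mem_toFinset.mp he
    obtain ⟨⟨u, i⟩, ⟨v, j⟩⟩ := e
    have hadj : F.Adj u v := hsub heS
    have huv : u ≠ v := hadj.ne
    have hsubset : Finset.univ.filter (fun g : α → Fin b => P g s((u, i), (v, j)))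
        ⊆ Finset.univ.filter (fun g : α → Fin b => g u = i ∧ g v = j) := by
      intro g hg
      simp only [Finset.mem_filter, Finset.mem_univ, true_and] at hg ⊢
      obtain ⟨u', v', hadj', heq⟩ := hg
      rw [Sym2.eq_iff] at heq
      rcases heq with ⟨h1, h2⟩ | ⟨h1, h2⟩
      · obtain ⟨rfl, rfl⟩ := Prod.mk.injEq .. ▸ h1
        obtain ⟨rfl, rfl⟩ := Prod.mk.injEq .. ▸ h2
        exact ⟨rfl, rfl⟩
      · obtain ⟨rfl, rfl⟩ := Prod.mk.injEq .. ▸ h1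
        obtain ⟨rfl, rfl⟩ := Prod.mk.injEq .. ▸ h2
        exact ⟨rfl, rfl⟩
    refine le_trans (Finset.card_le_card hsubset) ?_
    -- inject into functions on the complement of {u, v}
    have hinj2 : Set.InjOn (fun (g : α → Fin b) (x : {x : α // x ≠ u ∧ x ≠ v}) => g x.1)
        ↑(Finset.univ.filter (fun g : α → Fin b => g u = i ∧ g v = j)) := by
      intro g hg g' hg' hgg'
      simp only [Finset.coe_filter, Set.mem_setOf_eq] at hg hg'
      funext a
      by_cases hau : a = u
      · rw [hau, hg.2.1, hg'.2.1]
      by_cases hav : a = v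
      · rw [hav, hg.2.2, hg'.2.2]
      exact congrFun hgg' ⟨a, hau, hav⟩
    have := Finset.card_le_card_of_injOn _ (fun g _ => Finset.mem_univ _) hinj2
    refine le_trans this ?_
    rw [Finset.card_univ, Fintype.card_fun, Fintype.card_fin]
    have hcardsub : Fintype.card {x : α // x ≠ u ∧ x ≠ v} = n - 2 := by
      rw [Fintype.card_subtype]
      have : Finset.univ.filter (fun x : α => x ≠ u ∧ x ≠ v)
          = Finset.univ \ {u, v} := by
        ext a; simp [not_or]
      rw [this, Finset.card_sdiff_of_subset (Finset.subset_univ _), Finset.card_univ,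
        Finset.card_pair huv]
    rw [hcardsub]
  -- double counting
  have hsum : (b ^ n) * Ecol F r ≤ Sf.card * b ^ (n - 2) := by
    calc (b ^ n) * Ecol F r
        = ∑ _g : α → Fin b, Ecol F r := by
          rw [Finset.sum_const, Finset.card_univ, Fintype.card_fun, Fintype.card_fin,
            smul_eq_mul]
      _ ≤ ∑ g : α → Fin b, (Sf.filter (P g)).card := by
          refine Finset.sum_le_sum fun g _ => ?_
          have := key g
          rwa [hcardset g] at this
      _ = ∑ e ∈ Sf, (Finset.univ.filter (fun g : α → Fin b => P g e)).card := by
          simp_rw [Finset.card_filter]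
          rw [Finset.sum_comm]
      _ ≤ ∑ _e ∈ Sf, b ^ (n - 2) := Finset.sum_le_sum peredge
      _ = Sf.card * b ^ (n - 2) := by rw [Finset.sum_const, smul_eq_mul]
  have hpow : b ^ n = b ^ (n - 2) * b ^ 2 := by
    rw [← pow_add]
    congr 1
    omega
  have hSfcard : Sf.card = S.ncard := (Set.ncard_eq_toFinset_card S hS).symm
  rw [hpow, mul_assoc] at hsum
  have hfin : b ^ 2 * Ecol F r ≤ Sf.card := by
    have hpos : 0 < b ^ (n - 2) := Nat.pow_pos hb
    have : b ^ (n - 2) * (b ^ 2 * Ecol F r) ≤ b ^ (n - 2) * Sf.card := by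
      calc b ^ (n - 2) * (b ^ 2 * Ecol F r) ≤ Sf.card * b ^ (n - 2) := hsum
        _ = b ^ (n - 2) * Sf.card := mul_comm _ _
    exact Nat.le_of_mul_le_mul_left this hpos
  rwa [hSfcard] at hfin
end
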